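/- Let 1 < p < ∞ and let (û_i) be a sequence in L^p(ℝ^n, μ) (μ a nonnegative measure) with ∫|û_i|^p dμ ≤ 1 for all i ≥ 1. Set ŝ_k = û_1 + ⋯ + û_k. Then there exist positive constants A and B depending only on p (independent of k and the sequence) such that for all k ≥ 2: ∫|ŝ_k|^p dμ ≤ (A + B·k^{p-2}) + p·∫ |ŝ_{k-1}|^{p-1} sgn(ŝ_{k-1}) û_k dμ + ∫ |ŝ_{k-1}|^p dμ. -/

import Mathlib

open Real MeasureTheory Finset

open scoped ENNReal NNReal



namespace StmtTwoAux

/-- sign-power function rewriting -/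
lemma abs_rpow_mul_self (r : ℝ) (hr : 0 < r) (t : ℝ) :
    |t| ^ (r - 1) * t = Real.sign t * |t| ^ r := by
  rcases lt_trichotomy t 0 with h | h | h
  · rw [Real.sign_of_neg h, abs_of_neg h]
    rw [show r = (r-1) + 1 by ring, Real.rpow_add_one (by linarith : (-t) ≠ 0)]
    ring
  · simp [h, Real.sign_zero, Real.zero_rpow (ne_of_gt hr)]
  · rw [Real.sign_of_pos h, abs_of_pos h]
    rw [show r = (r-1) + 1 by ring, Real.rpow_add_one (ne_of_gt h)]
    ring

lemma abs_sign_le_one (t : ℝ) : |Real.sign t| ≤ 1 := by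
  rcases Real.sign_apply_eq t with h | h | h <;> rw [h] <;> norm_num

lemma sign_mul_abs_rpow_of_nonneg {r t : ℝ} (hr : 0 < r) (ht : 0 ≤ t) :
    Real.sign t * |t| ^ r = t ^ r := by
  rcases eq_or_lt_of_le ht with h | h
  · simp [← h, Real.sign_zero, Real.zero_rpow (ne_of_gt hr)]
  · rw [Real.sign_of_pos h, abs_of_pos h, one_mul]

lemma sign_mul_abs_rpow_of_nonpos {r t : ℝ} (hr : 0 < r) (ht : t ≤ 0) :
    Real.sign t * |t| ^ r = -((-t) ^ r) := by
  rcases eq_or_lt_of_le ht with h | h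
  · simp [h, Real.sign_zero, Real.zero_rpow (ne_of_gt hr)]
  · rw [Real.sign_of_neg h, abs_of_neg h]; ring

/-- subadditivity of rpow for exponent ≤ 1 -/
lemma rpow_add_le_add_rpow' {a b r : ℝ} (ha : 0 ≤ a) (hb : 0 ≤ b) (hr0 : 0 ≤ r) (hr1 : r ≤ 1) :
    (a + b) ^ r ≤ a ^ r + b ^ r := by
  have h := NNReal.rpow_add_le_add_rpow (a.toNNReal) (b.toNNReal) hr0 hr1
  have h2 := NNReal.coe_le_coe.mpr h
  rw [NNReal.coe_add, NNReal.coe_rpow, NNReal.coe_rpow, NNReal.coe_rpow,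
    ← Real.toNNReal_add ha hb, Real.coe_toNNReal _ (by linarith), Real.coe_toNNReal _ ha,
    Real.coe_toNNReal _ hb] at h2
  exact h2

lemma rpow_sub_rpow_le {r x y : ℝ} (hr0 : 0 < r) (hr1 : r ≤ 1) (hy : 0 ≤ y) (hxy : y ≤ x) :
    x ^ r - y ^ r ≤ (x - y) ^ r := by
  have h := rpow_add_le_add_rpow' (sub_nonneg.2 hxy) hy hr0.le hr1
  rw [sub_add_cancel] at h
  linarith

/-- Bernoulli-type estimate for exponent ≥ 1 -/
lemma rpow_sub_rpow_le' {r x y : ℝ} (hr : 1 ≤ r) (hy : 0 ≤ y) (hxy : y ≤ x) :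
    x ^ r - y ^ r ≤ r * x ^ (r - 1) * (x - y) := by
  have hx : 0 ≤ x := hy.trans hxy
  rcases eq_or_lt_of_le hx with h | h
  · have hy0 : y = 0 := le_antisymm (hxy.trans_eq h.symm) hy
    simp [← h, hy0, Real.zero_rpow (by positivity : r ≠ 0)]
  · have hs : (-1 : ℝ) ≤ y / x - 1 := by
      have : 0 ≤ y / x := div_nonneg hy h.le
      linarith
    have B := one_add_mul_self_le_rpow_one_add hs hr
    rw [show 1 + (y/x - 1) = y/x by ring] at B
    have hxr : (0:ℝ) < x ^ r := Real.rpow_pos_of_pos h r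
    have B' := mul_le_mul_of_nonneg_right B hxr.le
    have hdiv : (y/x) ^ r * x ^ r = y ^ r := by
      rw [Real.div_rpow hy h.le]
      field_simp
    have hXx : x ^ r = x ^ (r - 1) * x := by
      rw [show r = (r-1) + 1 by ring, Real.rpow_add_one (ne_of_gt h)]
      ring_nf
    rw [hdiv] at B'
    have key : (1 + r * (y/x - 1)) * x ^ r = x ^ r + r * x ^ (r-1) * (y - x) := by
      rw [hXx]
      field_simp
    rw [key] at B'
    linarith

/-- a^r ≤ T^(r-1) * a when 0 ≤ a ≤ T, 1 ≤ r -/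
lemma rpow_le_rpow_pred_mul {r a T : ℝ} (hr : 1 ≤ r) (ha : 0 ≤ a) (haT : a ≤ T) :
    a ^ r ≤ T ^ (r - 1) * a := by
  rcases eq_or_lt_of_le ha with h | h
  · simp [← h, Real.zero_rpow (by positivity : r ≠ 0)]
  · have : a ^ r = a ^ (r-1) * a := by
      rw [show r = (r-1) + 1 by ring, Real.rpow_add_one (ne_of_gt h)]; ring_nf
    rw [this]
    have h2 : a ^ (r-1) ≤ T ^ (r-1) := Real.rpow_le_rpow ha haT (by linarith)
    exact mul_le_mul_of_nonneg_right h2 ha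

end StmtTwoAux


namespace StmtTwoAux2

noncomputable def S (r t : ℝ) : ℝ := Real.sign t * |t| ^ r

lemma S_nonneg {r t : ℝ} (hr : 0 < r) (ht : 0 ≤ t) : S r t = t ^ r := by
  rcases eq_or_lt_of_le ht with h | h
  · simp [S, ← h, Real.sign_zero, Real.zero_rpow (ne_of_gt hr)]
  · rw [S, Real.sign_of_pos h, abs_of_pos h, one_mul]

lemma S_nonpos {r t : ℝ} (hr : 0 < r) (ht : t ≤ 0) : S r t = -((-t) ^ r) := by
  rcases eq_or_lt_of_le ht with h | h
  · simp [S, h, Real.sign_zero, Real.zero_rpow (ne_of_gt hr)]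
  · rw [S, Real.sign_of_neg h, abs_of_neg h]; ring

/-- Hölder-continuity of S r for 0 < r ≤ 1. -/
lemma S_sub_le {r : ℝ} (hr0 : 0 < r) (hr1 : r ≤ 1) (x y : ℝ) :
    |S r x - S r y| ≤ 2 * |x - y| ^ r := by
  have key : ∀ x y : ℝ, 0 ≤ y → y ≤ x → x ^ r - y ^ r ≤ (x - y) ^ r := by
    intro x y hy hxy
    have h := StmtTwoAux.rpow_add_le_add_rpow' (sub_nonneg.2 hxy) hy hr0.le hr1
    rw [sub_add_cancel] at h; linarith
  have same : ∀ x y : ℝ, 0 ≤ y → 0 ≤ x → |x ^ r - y ^ r| ≤ |x - y| ^ r := by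
    intro x y hy hx
    rcases le_total y x with h | h
    · rw [abs_of_nonneg (by linarith : (0:ℝ) ≤ x - y),
        abs_of_nonneg (sub_nonneg.2 (Real.rpow_le_rpow hy h hr0.le))]
      exact key x y hy h
    · rw [abs_of_nonpos (by linarith : x - y ≤ 0),
        abs_of_nonpos (sub_nonpos.2 (Real.rpow_le_rpow hx h hr0.le))]
      have := key y x hx h
      rw [neg_sub, neg_sub]; linarith
  rcases le_total 0 x with hx | hx <;> rcases le_total 0 y with hy | hy
  · rw [S_nonneg hr0 hx, S_nonneg hr0 hy]
    calc |x ^ r - y ^ r| ≤ |x - y| ^ r := same x y hy hx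
    _ ≤ 2 * |x - y| ^ r := by nlinarith [Real.rpow_nonneg (abs_nonneg (x-y)) r]
  · -- x ≥ 0 ≥ y
    rw [S_nonneg hr0 hx, S_nonpos hr0 hy]
    have h1 : x ^ r ≤ (x - y) ^ r := Real.rpow_le_rpow hx (by linarith) hr0.le
    have h2 : (-y) ^ r ≤ (x - y) ^ r := Real.rpow_le_rpow (by linarith) (by linarith) hr0.le
    have hxr : 0 ≤ x ^ r := Real.rpow_nonneg hx r
    have hyr : 0 ≤ (-y) ^ r := Real.rpow_nonneg (by linarith) r
    rw [abs_of_nonneg (by linarith : (0:ℝ) ≤ x - y)]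
    rw [abs_of_nonneg (by linarith : (0:ℝ) ≤ x ^ r - -((-y) ^ r))]
    linarith
  · -- y ≥ 0 ≥ x
    rw [S_nonpos hr0 hx, S_nonneg hr0 hy]
    have h1 : (-x) ^ r ≤ (y - x) ^ r := Real.rpow_le_rpow (by linarith) (by linarith) hr0.le
    have h2 : y ^ r ≤ (y - x) ^ r := Real.rpow_le_rpow hy (by linarith) hr0.le
    have hxr : 0 ≤ (-x) ^ r := Real.rpow_nonneg (by linarith) r
    have hyr : 0 ≤ y ^ r := Real.rpow_nonneg hy r
    rw [abs_of_nonpos (by linarith : x - y ≤ 0), neg_sub]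
    rw [abs_of_nonpos (by linarith : -((-x) ^ r) - y ^ r ≤ 0), neg_sub]
    linarith
  · rw [S_nonpos hr0 hx, S_nonpos hr0 hy]
    have : |-((-x) ^ r) - -((-y) ^ r)| = |(-y) ^ r - (-x) ^ r| := by
      rw [show -((-x) ^ r) - -((-y) ^ r) = (-y) ^ r - (-x) ^ r by ring]
    rw [this]
    calc |(-y) ^ r - (-x) ^ r| ≤ |(-y) - (-x)| ^ r :=
          same (-y) (-x) (by linarith) (by linarith)
    _ = |x - y| ^ r := by rw [show -y - -x = x - y by ring]
    _ ≤ 2 * |x - y| ^ r := by nlinarith [Real.rpow_nonneg (abs_nonneg (x-y)) r]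

/-- Lipschitz-type bound on S r for 1 ≤ r. -/
lemma S_sub_le' {r : ℝ} (hr : 1 ≤ r) (x y : ℝ) :
    |S r x - S r y| ≤ r * (|x| + |y|) ^ (r - 1) * |x - y| := by
  have hr0 : (0:ℝ) < r := by linarith
  have key : ∀ x y : ℝ, 0 ≤ y → y ≤ x →
      x ^ r - y ^ r ≤ r * (|x| + |y|) ^ (r - 1) * (x - y) := by
    intro x y hy hxy
    have hx : 0 ≤ x := hy.trans hxy
    calc x ^ r - y ^ r ≤ r * x ^ (r - 1) * (x - y) := StmtTwoAux.rpow_sub_rpow_le' hr hy hxy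
    _ ≤ r * (|x| + |y|) ^ (r - 1) * (x - y) := by
        have h1 : x ^ (r-1) ≤ (|x| + |y|) ^ (r-1) := by
          apply Real.rpow_le_rpow hx _ (by linarith)
          rw [abs_of_nonneg hx]; nlinarith [abs_nonneg y]
        have := mul_le_mul_of_nonneg_right (mul_le_mul_of_nonneg_left h1 hr0.le)
          (sub_nonneg.2 hxy)
        linarith
  have same : ∀ x y : ℝ, 0 ≤ y → 0 ≤ x →
      |x ^ r - y ^ r| ≤ r * (|x| + |y|) ^ (r - 1) * |x - y| := by
    intro x y hy hx
    rcases le_total y x with h | h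
    · rw [abs_of_nonneg (by linarith : (0:ℝ) ≤ x - y),
        abs_of_nonneg (sub_nonneg.2 (Real.rpow_le_rpow hy h hr0.le))]
      exact key x y hy h
    · rw [abs_of_nonpos (by linarith : x - y ≤ 0),
        abs_of_nonpos (sub_nonpos.2 (Real.rpow_le_rpow hx h hr0.le))]
      have := key y x hx h
      rw [show |y| + |x| = |x| + |y| by ring] at this
      rw [neg_sub, neg_sub]; linarith
  have opp : ∀ x y : ℝ, 0 ≤ x → y ≤ 0 →
      x ^ r + (-y) ^ r ≤ r * (|x| + |y|) ^ (r - 1) * (x - y) := by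
    intro x y hx hy
    set T := |x| + |y| with hT
    have hTx : x ≤ T := by rw [hT, abs_of_nonneg hx]; nlinarith [abs_nonneg y]
    have hTy : -y ≤ T := by rw [hT, abs_of_nonpos hy]; nlinarith [abs_nonneg x]
    have h1 : x ^ r ≤ T ^ (r-1) * x := StmtTwoAux.rpow_le_rpow_pred_mul hr hx hTx
    have h2 : (-y) ^ r ≤ T ^ (r-1) * (-y) := StmtTwoAux.rpow_le_rpow_pred_mul hr (by linarith) hTy
    have hTnn : 0 ≤ T ^ (r-1) := Real.rpow_nonneg (by positivity) _
    have hxy : 0 ≤ x - y := by linarith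
    nlinarith [mul_le_mul_of_nonneg_right (mul_le_mul_of_nonneg_left hTnn (by linarith : 0 ≤ r - 1)) hxy]
  rcases le_total 0 x with hx | hx <;> rcases le_total 0 y with hy | hy
  · rw [S_nonneg hr0 hx, S_nonneg hr0 hy]; exact same x y hy hx
  · rw [S_nonneg hr0 hx, S_nonpos hr0 hy]
    have h := opp x y hx hy
    have hxr : 0 ≤ x ^ r := Real.rpow_nonneg hx r
    have hyr : 0 ≤ (-y) ^ r := Real.rpow_nonneg (by linarith) r
    rw [abs_of_nonneg (by linarith : (0:ℝ) ≤ x ^ r - -((-y) ^ r)),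
      abs_of_nonneg (by linarith : (0:ℝ) ≤ x - y)]
    linarith
  · rw [S_nonpos hr0 hx, S_nonneg hr0 hy]
    have h := opp y x hy hx
    have hxr : 0 ≤ (-x) ^ r := Real.rpow_nonneg (by linarith) r
    have hyr : 0 ≤ y ^ r := Real.rpow_nonneg hy r
    rw [abs_of_nonpos (by linarith : -((-x) ^ r) - y ^ r ≤ 0), neg_sub,
      abs_of_nonpos (by linarith : x - y ≤ 0), neg_sub]
    rw [show |y| + |x| = |x| + |y| by ring] at h
    linarith
  · rw [S_nonpos hr0 hx, S_nonpos hr0 hy]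
    have h := same (-y) (-x) (by linarith) (by linarith)
    rw [show -((-x) ^ r) - -((-y) ^ r) = (-y) ^ r - (-x) ^ r by ring]
    rw [abs_neg, abs_neg, show |y| + |x| = |x| + |y| by ring,
      show -y - -x = x - y by ring] at h
    exact h
    
end StmtTwoAux2


namespace StmtTwoAux2

/-- abstract MVT step -/
lemma pt_main {p : ℝ} (hp : 1 < p) {D : ℝ} (a b : ℝ)
    (hD : ∀ t ∈ Set.Icc (0:ℝ) 1, |S (p-1) (a + t*b) - S (p-1) a| * |b| ≤ D) :
    |a + b| ^ p ≤ |a| ^ p + p * S (p-1) a * b + p * D := by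
  have hp1 : (0:ℝ) < p - 1 := by linarith
  set c : ℝ := p * S (p-1) a with hc
  set g : ℝ → ℝ := fun t => |a + t*b| ^ p - t * (c * b) with hg
  have hderiv : ∀ t : ℝ, HasDerivAt g (p * b * (S (p-1) (a + t*b) - S (p-1) a)) t := by
    intro t
    have h1 : HasDerivAt (fun t : ℝ => a + t*b) b t := by
      simpa using ((hasDerivAt_id t).mul_const b).const_add a
    have h2 := (hasDerivAt_abs_rpow (a + t*b) hp).comp t h1
    have h3 : HasDerivAt (fun t : ℝ => t * (c * b)) (c * b) t := by
      simpa using (hasDerivAt_id t).mul_const (c * b)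
    have h4 := h2.sub h3
    refine h4.congr_deriv ?_
    rw [hc]
    have : |a + t*b| ^ (p-2) * (a + t*b) = S (p-1) (a + t*b) := by
      rw [show p - 2 = (p-1) - 1 by ring]
      exact StmtTwoAux.abs_rpow_mul_self (p-1) hp1 (a + t*b)
    rw [show p * |a + t*b| ^ (p-2) * (a + t*b) = p * (|a + t*b| ^ (p-2) * (a + t*b)) by ring, this]
    ring
  have key := norm_image_sub_le_of_norm_deriv_le_segment_01'
    (f := g) (f' := fun t => p * b * (S (p-1) (a + t*b) - S (p-1) a)) (C := p * D)
    (fun t _ => (hderiv t).hasDerivWithinAt) ?_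
  · have hg1 : g 1 = |a + b| ^ p - c * b := by simp [hg]
    have hg0 : g 0 = |a| ^ p := by simp [hg]
    rw [hg1, hg0] at key
    have := (abs_le.1 key).2
    rw [hc] at this ⊢
    linarith
  · intro t ht
    have ht' : t ∈ Set.Icc (0:ℝ) 1 := Set.mem_Icc.2 ⟨ht.1, ht.2.le⟩
    have := hD t ht'
    rw [Real.norm_eq_abs, abs_mul, abs_mul, abs_of_pos (by linarith : (0:ℝ) < p),
      mul_assoc]
    rw [show |b| * |S (p-1) (a + t*b) - S (p-1) a| = |S (p-1) (a + t*b) - S (p-1) a| * |b| by ring]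
    exact mul_le_mul_of_nonneg_left this (by linarith)

lemma abs_rpow_pred_mul_abs {p : ℝ} (hp : 1 < p) (b : ℝ) : |b| ^ (p-1) * |b| = |b| ^ p := by
  rcases eq_or_ne b 0 with rfl | hb
  · simp [Real.zero_rpow (by linarith : p - 1 ≠ 0), Real.zero_rpow (by linarith : p ≠ 0)]
  · rw [show p = (p-1) + 1 by ring, Real.rpow_add_one (abs_ne_zero.2 hb)]
    ring_nf

/-- pointwise inequality, case 1 < p ≤ 2 -/
lemma pt_le2 {p : ℝ} (hp : 1 < p) (hp2 : p ≤ 2) (a b : ℝ) :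
    |a + b| ^ p ≤ |a| ^ p + p * S (p-1) a * b + p * (2 * |b| ^ p) := by
  apply pt_main hp
  intro t ht
  have h1 := S_sub_le (by linarith : (0:ℝ) < p - 1) (by linarith) (a + t*b) a
  rw [add_sub_cancel_left] at h1
  have htb : |t * b| ≤ |b| := by
    rw [abs_mul, abs_of_nonneg ht.1]
    nlinarith [abs_nonneg b, ht.2]
  have h2 : |t * b| ^ (p-1) ≤ |b| ^ (p-1) :=
    Real.rpow_le_rpow (abs_nonneg _) htb (by linarith)
  calc |S (p-1) (a + t*b) - S (p-1) a| * |b| ≤ (2 * |t*b| ^ (p-1)) * |b| :=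
        mul_le_mul_of_nonneg_right h1 (abs_nonneg b)
  _ ≤ (2 * |b| ^ (p-1)) * |b| := by nlinarith [abs_nonneg b]
  _ = 2 * |b| ^ p := by rw [mul_assoc, abs_rpow_pred_mul_abs hp]

/-- (x+y)^s ≤ 2^s (x^s + y^s) for x y ≥ 0, s ≥ 0 -/
lemma add_rpow_le_two_rpow {x y s : ℝ} (hx : 0 ≤ x) (hy : 0 ≤ y) (hs : 0 ≤ s) :
    (x + y) ^ s ≤ 2 ^ s * (x ^ s + y ^ s) := by
  have h2 : ∀ z : ℝ, 0 ≤ z → x + y ≤ 2 * z → (x + y) ^ s ≤ 2 ^ s * (x ^ s + y ^ s) → True := fun _ _ _ _ => trivial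
  rcases le_total x y with h | h
  · calc (x + y) ^ s ≤ (2 * y) ^ s := Real.rpow_le_rpow (by linarith) (by linarith) hs
    _ = 2 ^ s * y ^ s := Real.mul_rpow (by norm_num) hy
    _ ≤ 2 ^ s * (x ^ s + y ^ s) := by
        nlinarith [Real.rpow_nonneg hx s, Real.rpow_nonneg (by norm_num : (0:ℝ) ≤ 2) s]
  · calc (x + y) ^ s ≤ (2 * x) ^ s := Real.rpow_le_rpow (by linarith) (by linarith) hs
    _ = 2 ^ s * x ^ s := Real.mul_rpow (by norm_num) hx
    _ ≤ 2 ^ s * (x ^ s + y ^ s) := by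
        nlinarith [Real.rpow_nonneg hy s, Real.rpow_nonneg (by norm_num : (0:ℝ) ≤ 2) s]

/-- pointwise inequality, case 2 < p -/
lemma pt_gt2 {p : ℝ} (hp2 : 2 < p) (a b : ℝ) :
    |a + b| ^ p ≤ |a| ^ p + p * S (p-1) a * b +
      p * ((p-1) * 4 ^ (p-2) * (|a| ^ (p-2) * (b*b) + |b| ^ p)) := by
  have hp : 1 < p := by linarith
  apply pt_main hp
  intro t ht
  have h1 := S_sub_le' (by linarith : (1:ℝ) ≤ p - 1) (a + t*b) a
  rw [add_sub_cancel_left] at h1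
  have htb : |t * b| ≤ |b| := by
    rw [abs_mul, abs_of_nonneg ht.1]
    nlinarith [abs_nonneg b, ht.2]
  have hsum : |a + t*b| + |a| ≤ 2 * (|a| + |b|) := by
    have := abs_add_le a (t*b)
    linarith [abs_nonneg a, abs_nonneg b]
  have h3 : (|a + t*b| + |a|) ^ (p-2) ≤ (2 * (|a| + |b|)) ^ (p-2) :=
    Real.rpow_le_rpow (by positivity) hsum (by linarith)
  have h4 : (2 * (|a| + |b|)) ^ (p-2) = 2 ^ (p-2) * (|a| + |b|) ^ (p-2) :=
    Real.mul_rpow (by norm_num) (by positivity)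
  have h5 : (|a| + |b|) ^ (p-2) ≤ 2 ^ (p-2) * (|a| ^ (p-2) + |b| ^ (p-2)) :=
    add_rpow_le_two_rpow (abs_nonneg a) (abs_nonneg b) (by linarith)
  have h6 : (|a + t*b| + |a|) ^ (p-2) ≤ 4 ^ (p-2) * (|a| ^ (p-2) + |b| ^ (p-2)) := by
    have h2nn : (0:ℝ) ≤ 2 ^ (p-2) := Real.rpow_nonneg (by norm_num) _
    have h22 : (2:ℝ) ^ (p-2) * (2:ℝ) ^ (p-2) = (4:ℝ) ^ (p-2) := by
      rw [← Real.mul_rpow (by norm_num) (by norm_num)]; norm_num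
    calc (|a + t*b| + |a|) ^ (p-2) ≤ 2 ^ (p-2) * (|a| + |b|) ^ (p-2) := by rw [← h4]; exact h3
    _ ≤ 2 ^ (p-2) * (2 ^ (p-2) * (|a| ^ (p-2) + |b| ^ (p-2))) :=
        mul_le_mul_of_nonneg_left h5 h2nn
    _ = 4 ^ (p-2) * (|a| ^ (p-2) + |b| ^ (p-2)) := by rw [← mul_assoc, h22]
  have hbb : |b| ^ (p-2) * (|b| * |b|) = |b| ^ p := by
    rcases eq_or_ne b 0 with rfl | hb
    · simp [Real.zero_rpow (by linarith : p - 2 ≠ 0), Real.zero_rpow (by linarith : p ≠ 0)]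
    · have hbne : |b| ≠ 0 := abs_ne_zero.2 hb
      calc |b| ^ (p-2) * (|b| * |b|) = |b| ^ (p-2+1+1) := by
            rw [Real.rpow_add_one hbne, Real.rpow_add_one hbne]; ring
      _ = |b| ^ p := by rw [show p-2+1+1 = p by ring]
  have h6' := mul_le_mul_of_nonneg_left h6 (by linarith : (0:ℝ) ≤ p - 1)
  have h4nn : (0:ℝ) ≤ (p-1) * (4 ^ (p-2) * (|a| ^ (p-2) + |b| ^ (p-2))) := by
    have n1 := Real.rpow_nonneg (abs_nonneg a) (p-2)
    have n2 := Real.rpow_nonneg (abs_nonneg b) (p-2)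
    have n4 : (0:ℝ) ≤ (4:ℝ) ^ (p-2) := Real.rpow_nonneg (by norm_num) _
    exact mul_nonneg (by linarith) (mul_nonneg n4 (by linarith))
  calc |S (p-1) (a + t*b) - S (p-1) a| * |b|
      ≤ ((p-1) * (|a + t*b| + |a|) ^ (p-2) * |t*b|) * |b| := by
        have heq : (p-1) * (|a + t*b| + |a|) ^ ((p-1) - 1) * |t*b|
            = (p-1) * (|a + t*b| + |a|) ^ (p-2) * |t*b| := by
          rw [show p - 1 - 1 = p - 2 by ring]
        exact mul_le_mul_of_nonneg_right (by rw [← heq]; exact h1) (abs_nonneg b)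
  _ ≤ (((p-1) * (4 ^ (p-2) * (|a| ^ (p-2) + |b| ^ (p-2)))) * |b|) * |b| := by
        have step : (p-1) * (|a + t*b| + |a|) ^ (p-2) * |t*b|
            ≤ (p-1) * (4 ^ (p-2) * (|a| ^ (p-2) + |b| ^ (p-2))) * |b| :=
          mul_le_mul h6' htb (abs_nonneg _) h4nn
        exact mul_le_mul_of_nonneg_right step (abs_nonneg b)
  _ = (p-1) * 4 ^ (p-2) * (|a| ^ (p-2) * (|b| * |b|) + |b| ^ (p-2) * (|b| * |b|)) := by ring
  _ = (p-1) * 4 ^ (p-2) * (|a| ^ (p-2) * (b*b) + |b| ^ p) := by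
        rw [hbb, abs_mul_abs_self]

end StmtTwoAux2


namespace StmtTwoAux2

lemma measurable_sign' : Measurable Real.sign := by
  unfold Real.sign
  exact Measurable.ite measurableSet_Iio measurable_const
    (Measurable.ite measurableSet_Ioi measurable_const measurable_const)

lemma main_step {n : ℕ} {p : ℝ} (hp : 1 < p) (μ : Measure (Fin n → ℝ))
    (s v : (Fin n → ℝ) → ℝ)
    (hsmem : MemLp s (ENNReal.ofReal p) μ) (hvmem : MemLp v (ENNReal.ofReal p) μ)
    {M : ℝ} (hM : 0 ≤ M) (hsint : ∫ x, |s x| ^ p ∂μ ≤ M ^ p)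
    (hv1 : ∫ x, |v x| ^ p ∂μ ≤ 1) :
    ∫ x, |s x + v x| ^ p ∂μ ≤
      (2*p + p*(p-1)*4^(p-2) + p*(p-1)*4^(p-2) * M^(p-2))
      + p * ∫ x, |s x| ^ (p-1) * Real.sign (s x) * v x ∂μ
      + ∫ x, |s x| ^ p ∂μ := by
  have hp0 : (0:ℝ) < p := by linarith
  set P : ℝ≥0∞ := ENNReal.ofReal p with hP
  have hP0 : P ≠ 0 := by
    rw [hP, Ne, ENNReal.ofReal_eq_zero]; linarith
  have hPtop : P ≠ ∞ := ENNReal.ofReal_ne_top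
  have hPt : P.toReal = p := ENNReal.toReal_ofReal hp0.le
  -- integrability of |f|^p
  have hint : ∀ f : (Fin n → ℝ) → ℝ, MemLp f P μ → Integrable (fun x => |f x| ^ p) μ := by
    intro f hf
    have := hf.integrable_norm_rpow hP0 hPtop
    simpa [hPt, Real.norm_eq_abs] using this
  have hi0 : Integrable (fun x => |s x + v x| ^ p) μ := by
    have := hint _ (hsmem.add hvmem)
    simpa using this
  have hi1 : Integrable (fun x => |s x| ^ p) μ := hint _ hsmem
  have hi4 : Integrable (fun x => |v x| ^ p) μ := hint _ hvmem
  -- the integrand S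
  have hSeq : ∀ x, |s x| ^ (p-1) * Real.sign (s x) * v x = S (p-1) (s x) * v x := by
    intro x; rw [S]; ring
  -- membership of the sign-power function
  set Q : ℝ≥0∞ := ENNReal.ofReal (p/(p-1)) with hQ
  have habs : MemLp (fun x => |s x| ^ (p-1)) Q μ := by
    have h := hsmem.norm_rpow_div (ENNReal.ofReal (p-1))
    have ht : (ENNReal.ofReal (p-1)).toReal = p-1 := ENNReal.toReal_ofReal (by linarith)
    have hdiv : P / ENNReal.ofReal (p-1) = Q := by
      rw [hP, hQ, ← ENNReal.ofReal_div_of_pos (by linarith : (0:ℝ) < p-1)]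
    rw [ht, hdiv] at h
    simpa [Real.norm_eq_abs] using h
  have hSmem : MemLp (fun x => S (p-1) (s x)) Q μ := by
    apply MemLp.of_le habs
    · exact ((measurable_sign'.comp_aemeasurable hsmem.1.aemeasurable).mul
        habs.1.aemeasurable).aestronglyMeasurable
    · filter_upwards with x
      rw [S, Real.norm_eq_abs, Real.norm_eq_abs, abs_mul]
      nlinarith [abs_nonneg (|s x| ^ (p-1)), StmtTwoAux.abs_sign_le_one (s x)]
  have hone : (1:ℝ≥0∞)/1 = 1/Q + 1/P := by
    rw [hQ, hP, one_div, one_div, one_div,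
      ← ENNReal.ofReal_inv_of_pos (div_pos hp0 (by linarith)),
      ← ENNReal.ofReal_inv_of_pos hp0, inv_div,
      ← ENNReal.ofReal_add (div_nonneg (by linarith) hp0.le) (inv_nonneg.2 hp0.le)]
    rw [show (p-1)/p + p⁻¹ = 1 by field_simp; ring, ENNReal.ofReal_one]
    simp
  have hi2 : Integrable (fun x => S (p-1) (s x) * v x) μ := by
    haveI : ENNReal.HolderTriple Q P 1 :=
      ENNReal.holderConjugate_iff.2 (by simpa [one_div] using hone.symm)
    have h := MemLp.smul (r := 1) hvmem hSmem
    have := memLp_one_iff_integrable.mp h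
    simpa [Pi.smul_apply, smul_eq_mul, Pi.mul_def] using this
  -- the middle integral identity
  have hmid : ∫ x, |s x| ^ (p-1) * Real.sign (s x) * v x ∂μ = ∫ x, S (p-1) (s x) * v x ∂μ :=
    integral_congr_ae (Filter.Eventually.of_forall hSeq)
  have hvint1 : ∫ x, p * (2 * |v x| ^ p) ∂μ ≤ p * 2 := by
    rw [integral_const_mul]
    have h : ∫ x, 2 * |v x| ^ p ∂μ ≤ 2 := by
      rw [integral_const_mul]; linarith
    nlinarith
  rcases le_or_gt p 2 with hple | hpgt
  · -- case p ≤ 2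
    have hpt : ∀ x, |s x + v x| ^ p ≤ |s x| ^ p + p * S (p-1) (s x) * v x + p * (2 * |v x| ^ p) :=
      fun x => pt_le2 hp hple (s x) (v x)
    have hB : Integrable (fun x => p * S (p-1) (s x) * v x) μ := by
      have := hi2.const_mul p
      simpa [mul_assoc] using this
    have hC : Integrable (fun x => p * (2 * |v x| ^ p)) μ := by
      have := hi4.const_mul (p * 2)
      simpa [mul_assoc, mul_comm, mul_left_comm] using this
    have hAB : Integrable (fun x => |s x| ^ p + p * S (p-1) (s x) * v x) μ := hi1.add hB
    have hRint : Integrable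
        (fun x => |s x| ^ p + p * S (p-1) (s x) * v x + p * (2 * |v x| ^ p)) μ := hAB.add hC
    have key := integral_mono hi0 hRint (fun x => hpt x)
    rw [integral_add hAB hC, integral_add hi1 hB] at key
    have hmul : ∫ x, p * S (p-1) (s x) * v x ∂μ = p * ∫ x, S (p-1) (s x) * v x ∂μ := by
      rw [← integral_const_mul]
      congr 1; funext x; ring
    rw [hmul] at key
    have h4 : (0:ℝ) ≤ (4:ℝ)^(p-2) := Real.rpow_nonneg (by norm_num) _
    have hC2' : 0 ≤ p*(p-1)*4^(p-2) := mul_nonneg (mul_nonneg hp0.le (by linarith)) h4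
    have hC2 : 0 ≤ p*(p-1)*4^(p-2) * M^(p-2) := mul_nonneg hC2' (Real.rpow_nonneg hM _)
    rw [hmid]
    linarith [key, hvint1]
  · -- case 2 < p
    have hp2pos : (0:ℝ) < p - 2 := by linarith
    set P1 : ℝ := p/(p-2) with hP1d
    set P2 : ℝ := p/2 with hP2d
    have hP1pos : (0:ℝ) < P1 := div_pos hp0 hp2pos
    have hP2pos : (0:ℝ) < P2 := by rw [hP2d]; positivity
    have hpq : Real.HolderConjugate P1 P2 := by
      rw [Real.holderConjugate_iff]; constructor
      · rw [hP1d]; rw [one_lt_div hp2pos]; linarith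
      · rw [hP1d, hP2d, inv_div, inv_div]
        field_simp; ring
    have hf : MemLp (fun x => |s x| ^ (p-2)) (ENNReal.ofReal P1) μ := by
      have h := hsmem.norm_rpow_div (ENNReal.ofReal (p-2))
      have ht : (ENNReal.ofReal (p-2)).toReal = p-2 := ENNReal.toReal_ofReal hp2pos.le
      have hdiv : P / ENNReal.ofReal (p-2) = ENNReal.ofReal P1 := by
        rw [hP, hP1d, ← ENNReal.ofReal_div_of_pos hp2pos]
      rw [ht, hdiv] at h
      simpa [Real.norm_eq_abs] using h
    have hg : MemLp (fun x => v x * v x) (ENNReal.ofReal P2) μ := by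
      have h := hvmem.norm_rpow_div (ENNReal.ofReal 2)
      have ht : (ENNReal.ofReal (2:ℝ)).toReal = 2 := ENNReal.toReal_ofReal (by norm_num)
      have hdiv : P / ENNReal.ofReal (2:ℝ) = ENNReal.ofReal P2 := by
        rw [hP, hP2d, ← ENNReal.ofReal_div_of_pos (by norm_num : (0:ℝ) < 2)]
      rw [ht, hdiv] at h
      have heq : (fun x => ‖v x‖ ^ (2:ℝ)) = fun x => v x * v x := by
        funext x
        rw [Real.norm_eq_abs, show (2:ℝ) = ((2:ℕ):ℝ) by norm_num, Real.rpow_natCast,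
          pow_two, abs_mul_abs_self]
      rwa [heq] at h
    have hone2 : (1:ℝ≥0∞)/1 = 1/(ENNReal.ofReal P1) + 1/(ENNReal.ofReal P2) := by
      rw [one_div, one_div, one_div,
        ← ENNReal.ofReal_inv_of_pos hP1pos, ← ENNReal.ofReal_inv_of_pos hP2pos,
        ← ENNReal.ofReal_add (inv_nonneg.2 hP1pos.le) (inv_nonneg.2 hP2pos.le),
        hP1d, hP2d, inv_div, inv_div,
        show (p-2)/p + 2/p = 1 by field_simp; ring, ENNReal.ofReal_one]
      simp
    have hi3 : Integrable (fun x => |s x| ^ (p-2) * (v x * v x)) μ := by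
      haveI : ENNReal.HolderTriple (ENNReal.ofReal P1) (ENNReal.ofReal P2) 1 :=
        ENNReal.holderConjugate_iff.2 (by simpa [one_div] using hone2.symm)
      have h := MemLp.smul (r := 1) hg hf
      have := memLp_one_iff_integrable.mp h
      simpa [Pi.smul_apply, smul_eq_mul, Pi.mul_def] using this
    have holder := integral_mul_le_Lp_mul_Lq_of_nonneg hpq
      (Filter.Eventually.of_forall (fun x => Real.rpow_nonneg (abs_nonneg (s x)) (p-2)))
      (Filter.Eventually.of_forall (fun x => mul_self_nonneg (v x))) hf hg
    have E1 : ∫ x, (|s x| ^ (p-2)) ^ P1 ∂μ = ∫ x, |s x| ^ p ∂μ := by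
      apply integral_congr_ae; filter_upwards with x
      rw [← Real.rpow_mul (abs_nonneg (s x)),
        show (p-2) * P1 = p by rw [hP1d]; field_simp]
    have E2 : ∫ x, (v x * v x) ^ P2 ∂μ = ∫ x, |v x| ^ p ∂μ := by
      apply integral_congr_ae; filter_upwards with x
      rw [← abs_mul_abs_self (v x), ← pow_two, ← Real.rpow_natCast (|v x|) 2,
        ← Real.rpow_mul (abs_nonneg (v x)),
        show ((2:ℕ):ℝ) * P2 = p by rw [hP2d]; push_cast; field_simp]
    rw [E1, E2] at holder
    have hsnn : (0:ℝ) ≤ ∫ x, |s x| ^ p ∂μ :=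
      integral_nonneg (fun x => Real.rpow_nonneg (abs_nonneg _) _)
    have hvnn : (0:ℝ) ≤ ∫ x, |v x| ^ p ∂μ :=
      integral_nonneg (fun x => Real.rpow_nonneg (abs_nonneg _) _)
    have hstep1 : (∫ x, |s x| ^ p ∂μ) ^ (1/P1) ≤ M ^ (p-2) := by
      calc (∫ x, |s x| ^ p ∂μ) ^ (1/P1) ≤ (M ^ p) ^ (1/P1) :=
            Real.rpow_le_rpow hsnn hsint (by positivity)
      _ = M ^ (p-2) := by
            rw [← Real.rpow_mul hM, show p * (1/P1) = p - 2 by rw [hP1d]; field_simp]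
    have hstep2 : (∫ x, |v x| ^ p ∂μ) ^ (1/P2) ≤ 1 :=
      Real.rpow_le_one hvnn hv1 (by positivity)
    have hg3 : ∫ x, |s x| ^ (p-2) * (v x * v x) ∂μ ≤ M ^ (p-2) := by
      calc ∫ x, |s x| ^ (p-2) * (v x * v x) ∂μ
          ≤ (∫ x, |s x| ^ p ∂μ) ^ (1/P1) * (∫ x, |v x| ^ p ∂μ) ^ (1/P2) := holder
      _ ≤ M ^ (p-2) * 1 :=
          mul_le_mul hstep1 hstep2 (Real.rpow_nonneg hvnn _) (Real.rpow_nonneg hM _)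
      _ = M ^ (p-2) := mul_one _
    -- now integrate the pointwise inequality
    have hpt : ∀ x, |s x + v x| ^ p ≤ |s x| ^ p + p * S (p-1) (s x) * v x +
        p * ((p-1) * 4 ^ (p-2) * (|s x| ^ (p-2) * (v x * v x) + |v x| ^ p)) :=
      fun x => pt_gt2 hpgt (s x) (v x)
    have hB : Integrable (fun x => p * S (p-1) (s x) * v x) μ := by
      have := hi2.const_mul p
      simpa [mul_assoc] using this
    have hD : Integrable (fun x => |s x| ^ (p-2) * (v x * v x) + |v x| ^ p) μ := hi3.add hi4
    have hC : Integrable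
        (fun x => p * ((p-1) * 4 ^ (p-2) * (|s x| ^ (p-2) * (v x * v x) + |v x| ^ p))) μ := by
      have h := hD.const_mul (p * ((p-1) * 4 ^ (p-2)))
      have heq : (fun x => p * ((p-1) * 4 ^ (p-2) * (|s x| ^ (p-2) * (v x * v x) + |v x| ^ p)))
          = fun x => (p * ((p-1) * 4 ^ (p-2))) * (|s x| ^ (p-2) * (v x * v x) + |v x| ^ p) :=
        funext fun x => by ring
      rw [heq]; exact h
    have hAB : Integrable (fun x => |s x| ^ p + p * S (p-1) (s x) * v x) μ := hi1.add hB
    have hRint : Integrable (fun x => |s x| ^ p + p * S (p-1) (s x) * v x +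
        p * ((p-1) * 4 ^ (p-2) * (|s x| ^ (p-2) * (v x * v x) + |v x| ^ p))) μ := hAB.add hC
    have key := integral_mono hi0 hRint (fun x => hpt x)
    rw [integral_add hAB hC, integral_add hi1 hB] at key
    have hmul : ∫ x, p * S (p-1) (s x) * v x ∂μ = p * ∫ x, S (p-1) (s x) * v x ∂μ := by
      rw [← integral_const_mul]
      congr 1; funext x; ring
    rw [hmul] at key
    have hCval : ∫ x, p * ((p-1) * 4 ^ (p-2) * (|s x| ^ (p-2) * (v x * v x) + |v x| ^ p)) ∂μ
        ≤ p * ((p-1) * 4 ^ (p-2)) * (M ^ (p-2) + 1) := by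
      have heq : (fun x => p * ((p-1) * 4 ^ (p-2) * (|s x| ^ (p-2) * (v x * v x) + |v x| ^ p)))
          = fun x => (p * ((p-1) * 4 ^ (p-2))) * (|s x| ^ (p-2) * (v x * v x) + |v x| ^ p) :=
        funext fun x => by ring
      rw [heq, integral_const_mul, integral_add hi3 hi4]
      have hcnn : (0:ℝ) ≤ p * ((p-1) * 4 ^ (p-2)) := by
        have h4 : (0:ℝ) ≤ (4:ℝ)^(p-2) := Real.rpow_nonneg (by norm_num) _
        have : (0:ℝ) ≤ (p-1) * 4 ^ (p-2) := mul_nonneg (by linarith) h4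
        exact mul_nonneg hp0.le this
      exact mul_le_mul_of_nonneg_left (add_le_add hg3 hv1) hcnn
    rw [hmid]
    have h4 : (0:ℝ) ≤ (4:ℝ)^(p-2) := Real.rpow_nonneg (by norm_num) _
    nlinarith [key, hCval]

end StmtTwoAux2


/-- Lemma 2 of the paper: recursive estimate for `∫ |ŝ_k|^p dμ`, with constants
`A, B > 0` depending only on `p`, independent of `k` and of the sequence. -/
theorem stmt_2 (p : ℝ) (hp : 1 < p) (n : ℕ) :
    ∃ A B : ℝ, 0 < A ∧ 0 < B ∧
      ∀ (μ : Measure (Fin n → ℝ)) (u : ℕ → (Fin n → ℝ) → ℝ),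
        (∀ i, 1 ≤ i → MemLp (u i) (ENNReal.ofReal p) μ) →
        (∀ i, 1 ≤ i → ∫ x, |u i x| ^ p ∂μ ≤ 1) →
        ∀ k, 2 ≤ k →
          (∫ x, |∑ i ∈ Finset.Icc 1 k, u i x| ^ p ∂μ) ≤
            (A + B * (k : ℝ) ^ (p - 2)) +
            p * ∫ x, |∑ i ∈ Finset.Icc 1 (k - 1), u i x| ^ (p - 1) *
                  Real.sign (∑ i ∈ Finset.Icc 1 (k - 1), u i x) * u k x ∂μ +
            ∫ x, |∑ i ∈ Finset.Icc 1 (k - 1), u i x| ^ p ∂μ := by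
  have hp0 : (0:ℝ) < p := by linarith
  have h4 : (0:ℝ) < (4:ℝ) ^ (p-2) := Real.rpow_pos_of_pos (by norm_num) _
  set C : ℝ := p*(p-1)*4^(p-2) with hC
  have hCpos : 0 < C := by rw [hC]; exact mul_pos (mul_pos hp0 (by linarith)) h4
  refine ⟨2*p + 2*C + 1, C + 1, by nlinarith, by nlinarith, ?_⟩
  intro μ u hu h1 k hk
  obtain ⟨m, rfl⟩ : ∃ m, k = m + 1 := ⟨k - 1, by omega⟩
  have hm1 : 1 ≤ m := by omega
  have hm0 : (0:ℝ) ≤ (m:ℝ) := Nat.cast_nonneg m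
  simp only [Nat.add_sub_cancel]
  set P : ℝ≥0∞ := ENNReal.ofReal p with hP
  have hP0 : P ≠ 0 := by rw [hP, Ne, ENNReal.ofReal_eq_zero]; linarith
  have hPtop : P ≠ ∞ := ENNReal.ofReal_ne_top
  have hPt : P.toReal = p := ENNReal.toReal_ofReal hp0.le
  have hP1 : (1:ℝ≥0∞) ≤ P := by
    rw [hP, ← ENNReal.ofReal_one]
    exact ENNReal.ofReal_le_ofReal hp.le
  -- the partial sum
  have hsmem : MemLp (fun x => ∑ i ∈ Icc 1 m, u i x) P μ :=
    memLp_finset_sum _ (fun i hi => hu i (mem_Icc.1 hi).1)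
  have hvmem : MemLp (u (m+1)) P μ := hu (m+1) (by omega)
  -- L^p bound on the partial sum
  have hei : ∀ i ∈ Icc 1 m, eLpNorm (u i) P μ ≤ 1 := by
    intro i hi
    rw [(hu i (mem_Icc.1 hi).1).eLpNorm_eq_integral_rpow_norm hP0 hPtop]
    rw [show (1:ℝ≥0∞) = ENNReal.ofReal 1 by simp]
    apply ENNReal.ofReal_le_ofReal
    apply Real.rpow_le_one (integral_nonneg (fun x => Real.rpow_nonneg (norm_nonneg _) _))
    · rw [hPt]
      simpa [Real.norm_eq_abs] using h1 i (mem_Icc.1 hi).1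
    · rw [hPt]; positivity
  have hsnorm : eLpNorm (fun x => ∑ i ∈ Icc 1 m, u i x) P μ ≤ (m : ℝ≥0∞) := by
    have hfun : (fun x => ∑ i ∈ Icc 1 m, u i x) = ∑ i ∈ Icc 1 m, u i := by
      funext x; simp
    rw [hfun]
    calc eLpNorm (∑ i ∈ Icc 1 m, u i) P μ ≤ ∑ i ∈ Icc 1 m, eLpNorm (u i) P μ :=
          eLpNorm_sum_le (fun i hi => (hu i (mem_Icc.1 hi).1).1) hP1
    _ ≤ ∑ _i ∈ Icc 1 m, 1 := Finset.sum_le_sum hei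
    _ = (m : ℝ≥0∞) := by
        rw [Finset.sum_const, Nat.card_Icc]
        simp
  have hsint : ∫ x, |∑ i ∈ Icc 1 m, u i x| ^ p ∂μ ≤ (m:ℝ) ^ p := by
    rw [hsmem.eLpNorm_eq_integral_rpow_norm hP0 hPtop, hPt,
      show (m:ℝ≥0∞) = ENNReal.ofReal (m:ℝ) by simp] at hsnorm
    have hInn : (0:ℝ) ≤ ∫ x, ‖∑ i ∈ Icc 1 m, u i x‖ ^ p ∂μ :=
      integral_nonneg (fun x => Real.rpow_nonneg (norm_nonneg _) _)
    have h2 : (∫ x, ‖∑ i ∈ Icc 1 m, u i x‖ ^ p ∂μ) ^ p⁻¹ ≤ (m:ℝ) :=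
      (ENNReal.ofReal_le_ofReal_iff hm0).1 hsnorm
    have h3 := Real.rpow_le_rpow (Real.rpow_nonneg hInn _) h2 hp0.le
    rw [Real.rpow_inv_rpow hInn (ne_of_gt hp0)] at h3
    simpa [Real.norm_eq_abs] using h3
  -- apply the main step
  have hsplit : (∫ x, |∑ i ∈ Icc 1 (m+1), u i x| ^ p ∂μ)
      = ∫ x, |(∑ i ∈ Icc 1 m, u i x) + u (m+1) x| ^ p ∂μ := by
    apply integral_congr_ae; filter_upwards with x
    rw [Finset.sum_Icc_succ_top (by omega : 1 ≤ m + 1)]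
  rw [hsplit]
  have key := StmtTwoAux2.main_step hp μ (fun x => ∑ i ∈ Icc 1 m, u i x) (u (m+1))
    hsmem hvmem hm0 hsint (h1 (m+1) (by omega))
  -- final arithmetic
  have hmbound : (m:ℝ) ^ (p-2) ≤ 1 + ((m:ℝ)+1) ^ (p-2) := by
    have hK : (0:ℝ) ≤ ((m:ℝ)+1)^(p-2) := Real.rpow_nonneg (by linarith) _
    rcases le_or_gt p 2 with h | h
    · have h1m : (1:ℝ) ≤ (m:ℝ) := by exact_mod_cast hm1
      have := Real.rpow_le_one_of_one_le_of_nonpos h1m (by linarith : p - 2 ≤ 0)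
      linarith
    · have : (m:ℝ)^(p-2) ≤ ((m:ℝ)+1)^(p-2) :=
        Real.rpow_le_rpow hm0 (by linarith) (by linarith)
      linarith
  have hK : (0:ℝ) ≤ ((m:ℝ)+1)^(p-2) := Real.rpow_nonneg (by linarith) _
  have hmb : C * (m:ℝ)^(p-2) ≤ C * (1 + ((m:ℝ)+1)^(p-2)) :=
    mul_le_mul_of_nonneg_left hmbound hCpos.le
  rw [hC] at hmb
  push_cast
  beta_reduce at key
  rw [hC]
  linarith [key, hmb, hK]
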